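/- Let A be a finite set of positive rationals with |A/A| ≤ K|A|, and let A' ⊆ A be nonempty with E_+(A') ≤ E_0. Then E_+(A) ≤ K^4 · (|A|/|A'|)^4 · E_0. In particular, combining with the Plünnecke–Ruzsa bound |A/A| ≤ K^2|A| when |AA| ≤ K|A|, small energy of a large subset implies small energy of A up to polynomial-in-K losses. -/

import Mathlib

open scoped Pointwise

/-- Additive energy of a finite set of rationals. -/
def addEnergy (A : Finset ℚ) : ℕ :=
  ((A ×ˢ A ×ˢ A ×ˢ A).filter (fun x => x.1 + x.2.1 = x.2.2.1 + x.2.2.2)).card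

namespace EnergyFromSubsetAux

open Finset

/-- Pair-sum representation count. -/
def r (X Y : Finset ℚ) (s : ℚ) : ℕ :=
  ((X ×ˢ Y).filter fun p => p.1 + p.2 = s).card

/-- Difference representation count. -/
def d (X : Finset ℚ) (t : ℚ) : ℕ :=
  ((X ×ˢ X).filter fun p => p.1 - p.2 = t).card

lemma d_ne_zero {Y : Finset ℚ} {t : ℚ} (h : d Y t ≠ 0) : t ∈ Y - Y := by
  rw [d, Finset.card_ne_zero] at h
  obtain ⟨p, hp⟩ := h
  simp only [Finset.mem_filter, Finset.mem_product] at hp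
  exact hp.2 ▸ Finset.sub_mem_sub hp.1.1 hp.1.2

lemma r_ne_zero {X Y : Finset ℚ} {s : ℚ} (h : r X Y s ≠ 0) : s ∈ X + Y := by
  rw [r, Finset.card_ne_zero] at h
  obtain ⟨p, hp⟩ := h
  simp only [Finset.mem_filter, Finset.mem_product] at hp
  exact hp.2 ▸ Finset.add_mem_add hp.1.1 hp.1.2

/-- Our `addEnergy` agrees with Mathlib's. -/
lemma addEnergy_eq (A : Finset ℚ) : _root_.addEnergy A = Finset.addEnergy A A := by
  rw [_root_.addEnergy, Finset.addEnergy]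
  refine Finset.card_nbij' (fun x => ((x.1, x.2.2.1), (x.2.1, x.2.2.2)))
    (fun q => (q.1.1, q.2.1, q.1.2, q.2.2)) ?_ ?_ (fun _ _ => rfl) (fun _ _ => rfl)
  · rintro ⟨a, b, c, e⟩ h
    simp only [Finset.mem_filter, Finset.mem_product, Finset.mem_coe] at h ⊢
    tauto
  · rintro ⟨⟨a, b⟩, c, e⟩ h
    simp only [Finset.mem_filter, Finset.mem_product, Finset.mem_coe] at h ⊢
    tauto

/-- Mathlib's addEnergy as a sum of squared representation counts. -/
lemma energy_eq_sum_r_sq (X Y : Finset ℚ) :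
    Finset.addEnergy X Y = ∑ s ∈ X + Y, r X Y s ^ 2 :=
  Finset.addEnergy_eq_sum_sq' X Y

/-- Cross energy as a correlation of difference counts. -/
lemma cross_eq_sum_dd (X Y : Finset ℚ) :
    Finset.addEnergy X Y = ∑ t ∈ X - X, d X t * d Y t := by
  rw [Finset.addEnergy]
  rw [Finset.card_eq_sum_card_fiberwise
    (f := fun q : (ℚ × ℚ) × ℚ × ℚ => q.1.1 - q.1.2) (t := X - X) ?_]
  · refine Finset.sum_congr rfl fun t _ => ?_
    have : ((((X ×ˢ X) ×ˢ Y ×ˢ Y).filter fun x : (ℚ × ℚ) × ℚ × ℚ =>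
        x.1.1 + x.2.1 = x.1.2 + x.2.2).filter fun q => q.1.1 - q.1.2 = t)
        = ((X ×ˢ X).filter fun p => p.1 - p.2 = t) ×ˢ
          ((Y ×ˢ Y).filter fun p => p.2 - p.1 = t) := by
      ext ⟨⟨a1, a2⟩, b1, b2⟩
      simp only [Finset.mem_filter, Finset.mem_product]
      constructor
      · rintro ⟨⟨⟨⟨h1, h2⟩, h3, h4⟩, h5⟩, h6⟩
        exact ⟨⟨⟨h1, h2⟩, h6⟩, ⟨h3, h4⟩, by linarith⟩
      · rintro ⟨⟨⟨h1, h2⟩, h6⟩, ⟨h3, h4⟩, h5⟩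
        exact ⟨⟨⟨⟨h1, h2⟩, h3, h4⟩, by linarith⟩, h6⟩
    rw [this, Finset.card_product, d, d]
    congr 1
    exact Finset.card_nbij' (fun p => (p.2, p.1)) (fun p => (p.2, p.1))
      (by rintro ⟨a, b⟩ h; simp only [Finset.mem_filter, Finset.mem_product, Finset.mem_coe] at *; tauto)
      (by rintro ⟨a, b⟩ h; simp only [Finset.mem_filter, Finset.mem_product, Finset.mem_coe] at *; tauto)
      (fun _ _ => rfl) (fun _ _ => rfl)
  · rintro ⟨⟨a1, a2⟩, b1, b2⟩ hq
    simp only [Finset.mem_filter, Finset.mem_product, Finset.mem_coe] at hq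
    exact Finset.sub_mem_sub hq.1.1.1 hq.1.1.2

/-- Cauchy–Schwarz for cross energy. -/
lemma cross_sq_le (X Y : Finset ℚ) :
    (Finset.addEnergy X Y) ^ 2 ≤ Finset.addEnergy X X * Finset.addEnergy Y Y := by
  rw [cross_eq_sum_dd X Y]
  calc (∑ t ∈ X - X, d X t * d Y t) ^ 2
      ≤ (∑ t ∈ X - X, d X t ^ 2) * (∑ t ∈ X - X, d Y t ^ 2) :=
        Finset.sum_mul_sq_le_sq_mul_sq _ _ _
    _ ≤ Finset.addEnergy X X * Finset.addEnergy Y Y := by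
        refine Nat.mul_le_mul ?_ ?_
        · rw [cross_eq_sum_dd X X]; simp [sq]
        · rw [cross_eq_sum_dd Y Y]
          calc ∑ t ∈ X - X, d Y t ^ 2
              ≤ ∑ t ∈ Y - Y, d Y t ^ 2 := Finset.sum_le_sum_of_ne_zero
                (fun t _ ht => d_ne_zero (fun h => ht (by simp [h])))
            _ = ∑ t ∈ Y - Y, d Y t * d Y t := by simp [sq]

lemma mem_smul_iff {x α : ℚ} {X : Finset ℚ} (hα : α ≠ 0) : x ∈ α • X ↔ α⁻¹ * x ∈ X := by
  rw [Finset.mem_smul_finset]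
  constructor
  · rintro ⟨y, hy, rfl⟩; simpa [smul_eq_mul, hα] using hy
  · intro h; exact ⟨α⁻¹ * x, h, by rw [smul_eq_mul]; field_simp⟩

/-- Additive energy is invariant under dilation by a nonzero rational. -/
lemma energy_smul {α : ℚ} (hα : α ≠ 0) (X : Finset ℚ) :
    Finset.addEnergy (α • X) (α • X) = Finset.addEnergy X X := by
  rw [Finset.addEnergy, Finset.addEnergy]
  refine Finset.card_nbij'
    (fun q => ((α⁻¹ * q.1.1, α⁻¹ * q.1.2), (α⁻¹ * q.2.1, α⁻¹ * q.2.2)))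
    (fun q => ((α * q.1.1, α * q.1.2), (α * q.2.1, α * q.2.2))) ?_ ?_ ?_ ?_
  · rintro ⟨⟨a1, a2⟩, b1, b2⟩ hq
    simp only [Finset.mem_filter, Finset.mem_product, Finset.mem_coe, mem_smul_iff hα] at hq ⊢
    refine ⟨⟨⟨hq.1.1.1, hq.1.1.2⟩, hq.1.2.1, hq.1.2.2⟩, ?_⟩
    linear_combination α⁻¹ * hq.2
  · rintro ⟨⟨a1, a2⟩, b1, b2⟩ hq
    simp only [Finset.mem_filter, Finset.mem_product, Finset.mem_coe, mem_smul_iff hα] at hq ⊢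
    have h1 : α⁻¹ * (α * a1) = a1 := by field_simp
    have h2 : α⁻¹ * (α * a2) = a2 := by field_simp
    have h3 : α⁻¹ * (α * b1) = b1 := by field_simp
    have h4 : α⁻¹ * (α * b2) = b2 := by field_simp
    rw [h1, h2, h3, h4]
    refine ⟨hq.1, ?_⟩
    linear_combination α * hq.2
  · rintro ⟨⟨a1, a2⟩, b1, b2⟩ _
    simp only [Prod.mk.injEq]
    refine ⟨⟨?_, ?_⟩, ?_, ?_⟩ <;> field_simp
  · rintro ⟨⟨a1, a2⟩, b1, b2⟩ _
    simp only [Prod.mk.injEq]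
    refine ⟨⟨?_, ?_⟩, ?_, ?_⟩ <;> field_simp

/-- Covering bound on representation counts. -/
lemma cover (A A' : Finset ℚ) (hpos : ∀ a ∈ A, 0 < a) (hsub : A' ⊆ A) (s : ℚ) :
    A'.card ^ 2 * r A A s ≤
      ∑ p ∈ (A / A') ×ˢ (A / A'), r (p.1 • A') (p.2 • A') s := by
  have key : ((A' ×ˢ A') ×ˢ ((A ×ˢ A).filter fun p => p.1 + p.2 = s)).card ≤
      (((A / A') ×ˢ (A / A')).sigma fun p =>
        ((p.1 • A') ×ˢ (p.2 • A')).filter fun q => q.1 + q.2 = s).card := by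
    refine Finset.card_le_card_of_injOn
      (fun w => ⟨(w.2.1 / w.1.1, w.2.2 / w.1.2), (w.2.1, w.2.2)⟩) ?_ ?_
    · rintro ⟨⟨u, v⟩, x, y⟩ hw
      simp only [Finset.mem_product, Finset.mem_filter, Finset.mem_coe] at hw
      obtain ⟨⟨hu, hv⟩, ⟨hx, hy⟩, hs⟩ := hw
      have hu0 : u ≠ 0 := (hpos u (hsub hu)).ne'
      have hv0 : v ≠ 0 := (hpos v (hsub hv)).ne'
      have hx0 : x ≠ 0 := (hpos x hx).ne'
      have hy0 : y ≠ 0 := (hpos y hy).ne'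
      have hxu : x / u ≠ 0 := div_ne_zero hx0 hu0
      have hyv : y / v ≠ 0 := div_ne_zero hy0 hv0
      refine Finset.mem_sigma.2 ⟨Finset.mem_product.2
        ⟨Finset.div_mem_div hx hu, Finset.div_mem_div hy hv⟩, ?_⟩
      simp only [Finset.mem_filter, Finset.mem_product, mem_smul_iff hxu, mem_smul_iff hyv]
      refine ⟨⟨?_, ?_⟩, hs⟩
      · have : (x / u)⁻¹ * x = u := by field_simp
        rw [this]; exact hu
      · have : (y / v)⁻¹ * y = v := by field_simp
        rw [this]; exact hv
    · rintro ⟨⟨u1, v1⟩, x1, y1⟩ hw1 ⟨⟨u2, v2⟩, x2, y2⟩ hw2 heq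
      simp only [Finset.coe_product, Set.mem_prod, Finset.mem_coe, Finset.mem_product,
        Finset.mem_filter] at hw1 hw2
      obtain ⟨⟨hu1, hv1⟩, ⟨hx1, hy1⟩, -⟩ := hw1
      obtain ⟨⟨hu2, hv2⟩, ⟨hx2, hy2⟩, -⟩ := hw2
      simp only [Sigma.mk.inj_iff, Prod.mk.injEq, heq_eq_eq] at heq
      obtain ⟨⟨h1, h2⟩, h3, h4⟩ := heq
      subst h3; subst h4
      have hx0 : x1 ≠ 0 := (hpos x1 hx1).ne'
      have hy0 : y1 ≠ 0 := (hpos y1 hy1).ne'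
      have hu10 : u1 ≠ 0 := (hpos u1 (hsub hu1)).ne'
      have hu20 : u2 ≠ 0 := (hpos u2 (hsub hu2)).ne'
      have hv10 : v1 ≠ 0 := (hpos v1 (hsub hv1)).ne'
      have hv20 : v2 ≠ 0 := (hpos v2 (hsub hv2)).ne'
      have hu : u1 = u2 := by field_simp at h1; tauto
      have hv : v1 = v2 := by field_simp at h2; tauto
      simp [hu, hv]
  calc A'.card ^ 2 * r A A s
      = ((A' ×ˢ A') ×ˢ ((A ×ˢ A).filter fun p => p.1 + p.2 = s)).card := by
        rw [Finset.card_product, Finset.card_product, r, sq]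
    _ ≤ _ := key.trans_eq (by rw [Finset.card_sigma]; rfl)

/-- Cauchy–Schwarz contribution of a pair of dilates. -/
lemma pair_bound (A' : Finset ℚ) (S : Finset ℚ) {α β γ δ : ℚ}
    (hα : α ≠ 0) (hβ : β ≠ 0) (hγ : γ ≠ 0) (hδ : δ ≠ 0) :
    ∑ s ∈ S, r (α • A') (β • A') s * r (γ • A') (δ • A') s ≤ Finset.addEnergy A' A' := by
  set e := Finset.addEnergy A' A' with he
  have hsum : ∀ (X Y : Finset ℚ), ∑ s ∈ S, r X Y s ^ 2 ≤ Finset.addEnergy X Y := by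
    intro X Y
    rw [energy_eq_sum_r_sq]
    exact Finset.sum_le_sum_of_ne_zero
      (fun s _ hs => r_ne_zero (fun h => hs (by simp [h])))
  have hXY : ∀ (μ ν : ℚ), μ ≠ 0 → ν ≠ 0 →
      Finset.addEnergy (μ • A') (ν • A') ≤ e := by
    intro μ ν hμ hν
    have h2 : (Finset.addEnergy (μ • A') (ν • A')) ^ 2 ≤ e ^ 2 := by
      calc (Finset.addEnergy (μ • A') (ν • A')) ^ 2
          ≤ Finset.addEnergy (μ • A') (μ • A') * Finset.addEnergy (ν • A') (ν • A') :=
            cross_sq_le _ _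
        _ = e ^ 2 := by rw [energy_smul hμ, energy_smul hν, sq]
    exact (Nat.pow_le_pow_iff_left two_ne_zero).1 h2
  have hcs : (∑ s ∈ S, r (α • A') (β • A') s * r (γ • A') (δ • A') s) ^ 2 ≤ e ^ 2 := by
    calc (∑ s ∈ S, r (α • A') (β • A') s * r (γ • A') (δ • A') s) ^ 2
        ≤ (∑ s ∈ S, r (α • A') (β • A') s ^ 2) * (∑ s ∈ S, r (γ • A') (δ • A') s ^ 2) :=
          Finset.sum_mul_sq_le_sq_mul_sq _ _ _
      _ ≤ Finset.addEnergy (α • A') (β • A') * Finset.addEnergy (γ • A') (δ • A') :=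
          Nat.mul_le_mul (hsum _ _) (hsum _ _)
      _ ≤ e * e := Nat.mul_le_mul (hXY _ _ hα hβ) (hXY _ _ hγ hδ)
      _ = e ^ 2 := (sq e).symm
  exact (Nat.pow_le_pow_iff_left two_ne_zero).1 hcs

/-- The main counting inequality, in `ℕ`. -/
lemma main_nat (A A' : Finset ℚ) (hpos : ∀ a ∈ A, 0 < a) (hsub : A' ⊆ A) :
    A'.card ^ 4 * _root_.addEnergy A ≤ (A / A').card ^ 4 * _root_.addEnergy A' := by
  have hQ : ∀ α ∈ A / A', α ≠ 0 := by
    intro α hα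
    obtain ⟨a, ha, b, hb, rfl⟩ := Finset.mem_div.1 hα
    exact (div_pos (hpos a ha) (hpos b (hsub hb))).ne'
  set Q := A / A' with hQdef
  calc A'.card ^ 4 * _root_.addEnergy A
      = ∑ s ∈ A + A, (A'.card ^ 2 * r A A s) ^ 2 := by
        rw [addEnergy_eq, energy_eq_sum_r_sq, Finset.mul_sum]
        refine Finset.sum_congr rfl fun s _ => ?_
        ring
    _ ≤ ∑ s ∈ A + A, (∑ p ∈ Q ×ˢ Q, r (p.1 • A') (p.2 • A') s) ^ 2 :=
        Finset.sum_le_sum fun s _ => Nat.pow_le_pow_left (cover A A' hpos hsub s) 2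
    _ = ∑ s ∈ A + A, ∑ p ∈ Q ×ˢ Q, ∑ q ∈ Q ×ˢ Q,
          r (p.1 • A') (p.2 • A') s * r (q.1 • A') (q.2 • A') s := by
        refine Finset.sum_congr rfl fun s _ => ?_
        rw [sq, Finset.sum_mul_sum]
    _ = ∑ p ∈ Q ×ˢ Q, ∑ q ∈ Q ×ˢ Q, ∑ s ∈ A + A,
          r (p.1 • A') (p.2 • A') s * r (q.1 • A') (q.2 • A') s := by
        rw [Finset.sum_comm]
        refine Finset.sum_congr rfl fun p _ => Finset.sum_comm
    _ ≤ ∑ _p ∈ Q ×ˢ Q, ∑ _q ∈ Q ×ˢ Q, Finset.addEnergy A' A' := by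
        refine Finset.sum_le_sum fun p hp => Finset.sum_le_sum fun q hq => ?_
        have hp' := Finset.mem_product.1 hp
        have hq' := Finset.mem_product.1 hq
        exact pair_bound A' (A + A) (hQ _ hp'.1) (hQ _ hp'.2) (hQ _ hq'.1) (hQ _ hq'.2)
    _ = Q.card ^ 4 * _root_.addEnergy A' := by
        rw [Finset.sum_const, Finset.sum_const, addEnergy_eq, Finset.card_product]
        simp [smul_eq_mul]
        ring

end EnergyFromSubsetAux

/-- If `|A/A| ≤ K|A|` and a nonempty subset `A' ⊆ A` has additive energy at most `E₀`, then
`E₊(A) ≤ K⁴ (|A|/|A'|)⁴ E₀`. -/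
theorem energy_from_subset (A A' : Finset ℚ) (hpos : ∀ a ∈ A, 0 < a)
    (K : ℝ) (hK : ((A / A).card : ℝ) ≤ K * A.card)
    (hsub : A' ⊆ A) (hne : A'.Nonempty)
    (E₀ : ℝ) (hE : (addEnergy A' : ℝ) ≤ E₀) :
    (addEnergy A : ℝ) ≤ K ^ 4 * ((A.card : ℝ) / (A'.card : ℝ)) ^ 4 * E₀ := by
  have hmain := EnergyFromSubsetAux.main_nat A A' hpos hsub
  have hQsub : A / A' ⊆ A / A := Finset.div_subset_div_left hsub
  have hQcard : ((A / A').card : ℝ) ≤ K * A.card :=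
    le_trans (by exact_mod_cast Finset.card_le_card hQsub) hK
  have hm : (0 : ℝ) < (A'.card : ℝ) := by exact_mod_cast hne.card_pos
  have hKA : (0 : ℝ) ≤ K * A.card := le_trans (by positivity) hK
  have hmainR : ((A'.card : ℝ)) ^ 4 * (addEnergy A : ℝ) ≤
      ((A / A').card : ℝ) ^ 4 * (addEnergy A' : ℝ) := by exact_mod_cast hmain
  have hE' : (0 : ℝ) ≤ (addEnergy A' : ℝ) := by positivity
  have step : ((A / A').card : ℝ) ^ 4 * (addEnergy A' : ℝ) ≤ (K * A.card) ^ 4 * E₀ := by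
    have h1 : ((A / A').card : ℝ) ^ 4 ≤ (K * A.card) ^ 4 :=
      pow_le_pow_left₀ (by positivity) hQcard 4
    have h2 : ((A / A').card : ℝ) ^ 4 * (addEnergy A' : ℝ) ≤ (K * A.card) ^ 4 * (addEnergy A' : ℝ) :=
      mul_le_mul_of_nonneg_right h1 hE'
    exact h2.trans (mul_le_mul_of_nonneg_left hE (by positivity))
  have final : ((A'.card : ℝ)) ^ 4 * (addEnergy A : ℝ) ≤ (K * A.card) ^ 4 * E₀ :=
    hmainR.trans step
  rw [div_pow, mul_comm (K ^ 4)]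
  rw [div_mul_eq_mul_div, div_mul_eq_mul_div, le_div_iff₀ (by positivity)]
  calc (addEnergy A : ℝ) * (A'.card : ℝ) ^ 4
      = (A'.card : ℝ) ^ 4 * (addEnergy A : ℝ) := by ring
    _ ≤ (K * A.card) ^ 4 * E₀ := final
    _ = (A.card : ℝ) ^ 4 * K ^ 4 * E₀ := by ring
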